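/- Let G be a subgroup of S_n and let C be the initial convex cone of G with respect to linear forms l_1, ..., l_n defining an admissible term order with x_1 > x_2 > ... > x_n. Then every non-increasing vector u ∈ (ℝ≥0)^n (i.e., u_1 ≥ u_2 ≥ ... ≥ u_n) belongs to C. In particular, C contains the vectors (1,0,...,0), (1,1,0,...,0), ..., (1,...,1), and hence spans ℝ^n as a vector space. -/
import Mathlib

/-- `a ≥_lex 0`: all entries zero, or the first nonzero entry is positive. -/
def lexGe {n : ℕ} (a : Fin n → ℝ) : Prop :=
  (∀ j, a j = 0) ∨ ∃ i, (∀ j, j < i → a j = 0) ∧ 0 < a i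

/-- `a >_lex 0`: the first nonzero entry exists and is positive. -/
def lexGt {n : ℕ} (a : Fin n → ℝ) : Prop :=
  ∃ i, (∀ j, j < i → a j = 0) ∧ 0 < a i

/-- Action of a permutation on ℝ^n by permuting coordinates: (σ·v)ᵢ = v_{σ⁻¹ i}. -/
def permAct {n : ℕ} (σ : Equiv.Perm (Fin n)) (v : Fin n → ℝ) : Fin n → ℝ :=
  fun i => v (σ⁻¹ i)

/-- The initial convex cone of a permutation group G with respect to the term
order given by linear forms l₁, …, lₙ. -/
def initialCone {n : ℕ} (G : Subgroup (Equiv.Perm (Fin n)))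
    (l : Fin n → ((Fin n → ℝ) →ₗ[ℝ] ℝ)) : Set (Fin n → ℝ) :=
  {u | (∀ i, 0 ≤ u i) ∧ ∀ g ∈ G, lexGe fun k => l k (u - permAct g u)}

lemma lexGe_zero {n : ℕ} : lexGe (0 : Fin n → ℝ) := Or.inl fun _ => rfl

lemma lexGt_lexGe {n : ℕ} {a : Fin n → ℝ} (h : lexGt a) : lexGe a := Or.inr h

lemma lexGe_add {n : ℕ} {a b : Fin n → ℝ} (ha : lexGe a) (hb : lexGe b) :
    lexGe (a + b) := by
  rcases ha with ha | ⟨i, hai, hpi⟩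
  · rcases hb with hb | ⟨i, hbi, hpi⟩
    · exact Or.inl fun j => by simp [Pi.add_apply, ha j, hb j]
    · exact Or.inr ⟨i, fun j hj => by simp [Pi.add_apply, ha j, hbi j hj],
        by simpa [Pi.add_apply, ha i] using hpi⟩
  · rcases hb with hb | ⟨i', hbi, hpi'⟩
    · exact Or.inr ⟨i, fun j hj => by simp [Pi.add_apply, hb j, hai j hj],
        by simpa [Pi.add_apply, hb i] using hpi⟩
    · refine Or.inr ?_
      rcases lt_trichotomy i i' with h | h | h
      · exact ⟨i, fun j hj => by simp [Pi.add_apply, hai j hj, hbi j (hj.trans h)],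
          by simpa [Pi.add_apply, hbi i h] using hpi⟩
      · subst h
        exact ⟨i, fun j hj => by simp [Pi.add_apply, hai j hj, hbi j hj],
          by simpa [Pi.add_apply] using add_pos hpi hpi'⟩
      · exact ⟨i', fun j hj => by simp [Pi.add_apply, hbi j hj, hai j (hj.trans h)],
          by simpa [Pi.add_apply, hai i' h] using hpi'⟩

lemma lexGe_smul {n : ℕ} {c : ℝ} (hc : 0 ≤ c) {a : Fin n → ℝ} (ha : lexGe a) :
    lexGe (c • a) := by
  rcases hc.eq_or_lt with rfl | hc
  · exact Or.inl fun j => by simp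
  · rcases ha with ha | ⟨i, hai, hpi⟩
    · exact Or.inl fun j => by simp [ha j]
    · exact Or.inr ⟨i, fun j hj => by simp [hai j hj],
        by simpa using mul_pos hc hpi⟩

lemma lexGe_sum {n : ℕ} {ι : Type*} (s : Finset ι) (f : ι → (Fin n → ℝ))
    (h : ∀ i ∈ s, lexGe (f i)) : lexGe (∑ i ∈ s, f i) :=
  Finset.sum_induction f lexGe (fun _ _ => lexGe_add) lexGe_zero h

/-- Key lemma: difference of indicators of two equal-size sets, where elements
of `A \ B` are smaller than those of `B \ A`, is lexicographically nonnegative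
after applying the forms. -/
lemma keyLem {n : ℕ} (l : Fin n → ((Fin n → ℝ) →ₗ[ℝ] ℝ))
    (hord : ∀ i j : Fin n, i < j → lexGt fun k => l k (Pi.single i 1 - Pi.single j 1))
    (A B : Finset (Fin n)) (hcard : A.card = B.card)
    (hlt : ∀ a b : Fin n, a ∈ A → a ∉ B → b ∈ B → b ∉ A → a < b) :
    lexGe fun k => l k (fun i => (if i ∈ A then (1:ℝ) else 0) - if i ∈ B then 1 else 0) := by
  classical
  set D := A \ B with hD
  set E := B \ A with hE
  have hDE : D.card = E.card := Finset.card_sdiff_comm hcard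
  let e : {x // x ∈ D} ≃ {x // x ∈ E} := Finset.equivOfCardEq hDE
  have hsum : (fun i : Fin n => (if i ∈ A then (1:ℝ) else 0) - if i ∈ B then 1 else 0)
      = ∑ a : {x // x ∈ D}, ((Pi.single (↑a : Fin n) (1:ℝ) : Fin n → ℝ) - (Pi.single (↑(e a) : Fin n) (1:ℝ) : Fin n → ℝ)) := by
    funext i
    rw [Finset.sum_apply]
    simp only [Pi.sub_apply, Pi.single_apply]
    rw [Finset.sum_sub_distrib]
    rw [show (∑ a : {x // x ∈ D}, if i = ↑(e a) then (1:ℝ) else 0)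
        = ∑ b : {x // x ∈ E}, if i = ↑b then (1:ℝ) else 0 from
      Equiv.sum_comp e (fun b => if i = ↑b then (1:ℝ) else 0)]
    rw [Finset.sum_coe_sort D (fun x => if i = x then (1:ℝ) else 0),
      Finset.sum_coe_sort E (fun x => if i = x then (1:ℝ) else 0),
      Finset.sum_ite_eq, Finset.sum_ite_eq]
    by_cases hA : i ∈ A <;> by_cases hB : i ∈ B <;>
      simp [hD, hE, Finset.mem_sdiff, hA, hB]
  have hfun : (fun k => l k (fun i => (if i ∈ A then (1:ℝ) else 0) - if i ∈ B then 1 else 0))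
      = ∑ a : {x // x ∈ D}, (fun k => l k ((Pi.single (↑a : Fin n) (1:ℝ) : Fin n → ℝ) - (Pi.single (↑(e a) : Fin n) (1:ℝ) : Fin n → ℝ))) := by
    funext k
    rw [hsum, map_sum, Finset.sum_apply]
  rw [hfun]
  refine lexGe_sum _ _ fun a _ => lexGt_lexGe (hord _ _ ?_)
  have haD : (a : Fin n) ∈ A \ B := a.2
  have heE : ((e a : Fin n)) ∈ B \ A := (e a).2
  rw [Finset.mem_sdiff] at haD heE
  exact hlt _ _ haD.1 haD.2 heE.1 heE.2

lemma mem_cone {n : ℕ} (G : Subgroup (Equiv.Perm (Fin n)))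
    (l : Fin n → ((Fin n → ℝ) →ₗ[ℝ] ℝ))
    (hord : ∀ i j : Fin n, i < j → lexGt fun k => l k (Pi.single i 1 - Pi.single j 1))
    (u : Fin n → ℝ) (hnn : ∀ i, 0 ≤ u i) (hdec : ∀ i j : Fin n, i ≤ j → u j ≤ u i) :
    u ∈ initialCone G l := by
  classical
  refine ⟨hnn, fun g _ => ?_⟩
  set v : ℕ → ℝ := fun k => if h : k < n then u ⟨k, h⟩ else 0 with hv
  set t : ℕ → ℝ := fun m => v m - v (m + 1) with ht
  have ht0 : ∀ m, 0 ≤ t m := by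
    intro m
    simp only [ht, hv]
    by_cases h1 : m + 1 < n
    · have h2 : m < n := Nat.lt_of_succ_lt h1
      simp only [dif_pos h1, dif_pos h2]
      have := hdec ⟨m, h2⟩ ⟨m + 1, h1⟩ (by simp [Fin.le_def])
      linarith
    · by_cases h2 : m < n
      · simp only [dif_neg h1, dif_pos h2]
        have := hnn ⟨m, h2⟩
        linarith
      · simp [dif_neg h1, dif_neg h2]
  have hu : ∀ i : Fin n, u i = ∑ m ∈ Finset.range n, if (i : ℕ) ≤ m then t m else 0 := by
    intro i
    rw [← Finset.sum_filter]
    have hfil : (Finset.range n).filter (fun m => (i : ℕ) ≤ m) = Finset.Ico (i : ℕ) n := by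
      ext m
      simp [Finset.mem_filter, Finset.mem_range, Finset.mem_Ico, and_comm]
    rw [hfil, Finset.sum_Ico_eq_sub _ i.isLt.le]
    rw [Finset.sum_range_sub' v, Finset.sum_range_sub' v]
    have hvn : v n = 0 := by simp [hv]
    have hvi : v (i : ℕ) = u i := by simp [hv, i.isLt]
    rw [hvn, hvi]; ring
  set σ := (g : Equiv.Perm (Fin n))
  set d : ℕ → (Fin n → ℝ) := fun m => fun i =>
    (if (i : ℕ) ≤ m then (1:ℝ) else 0) - if ((σ⁻¹ i : Fin n) : ℕ) ≤ m then 1 else 0 with hd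
  have hveq : u - permAct g u = ∑ m ∈ Finset.range n, t m • d m := by
    funext i
    rw [Pi.sub_apply, Finset.sum_apply]
    simp only [Pi.smul_apply, smul_eq_mul, hd]
    rw [permAct, hu i, hu (σ⁻¹ i), ← Finset.sum_sub_distrib]
    refine Finset.sum_congr rfl fun m _ => ?_
    split_ifs <;> ring
  have hfun : (fun k => l k (u - permAct g u))
      = ∑ m ∈ Finset.range n, t m • (fun k => l k (d m)) := by
    funext k
    rw [hveq, map_sum, Finset.sum_apply]
    refine Finset.sum_congr rfl fun m _ => ?_
    rw [Pi.smul_apply, map_smul]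
  rw [hfun]
  refine lexGe_sum _ _ fun m _ => lexGe_smul (ht0 m) ?_
  set A : Finset (Fin n) := Finset.univ.filter (fun i => (i : ℕ) ≤ m) with hA
  set B : Finset (Fin n) := A.image σ with hB
  have hmemB : ∀ i : Fin n, i ∈ B ↔ (σ⁻¹ i : Fin n) ∈ A := by
    intro i
    constructor
    · rw [hB, Finset.mem_image]
      rintro ⟨a, ha, rfl⟩
      simpa using ha
    · intro h
      rw [hB, Finset.mem_image]
      exact ⟨σ⁻¹ i, h, by simp⟩
  have hdm : d m = fun i => (if i ∈ A then (1:ℝ) else 0) - if i ∈ B then 1 else 0 := by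
    funext i
    rw [hd]
    have h1 : i ∈ A ↔ (i : ℕ) ≤ m := by simp [hA]
    have h2 : i ∈ B ↔ ((σ⁻¹ i : Fin n) : ℕ) ≤ m := by rw [hmemB]; simp [hA]
    simp only [h1, h2]
  rw [hdm]
  refine keyLem l hord A B ?_ ?_
  · rw [hB, Finset.card_image_of_injective A σ.injective]
  · intro a b haA haB hbB hbA
    have ha : (a : ℕ) ≤ m := by simpa [hA] using haA
    have hb : ¬ (b : ℕ) ≤ m := by simpa [hA] using hbA
    exact Fin.lt_def.mpr (by omega)

/-- for an admissible term order with x₁ > … > xₙ, every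
non-increasing nonnegative vector belongs to the initial cone; in particular
the cone spans ℝ^n. -/
theorem stmt_10 (n : ℕ) (G : Subgroup (Equiv.Perm (Fin n)))
    (l : Fin n → ((Fin n → ℝ) →ₗ[ℝ] ℝ))
    (hli : LinearIndependent ℝ l)
    (hord : ∀ i j : Fin n, i < j → lexGt fun k => l k (Pi.single i 1 - Pi.single j 1)) :
    (∀ u : Fin n → ℝ, (∀ i, 0 ≤ u i) → (∀ i j : Fin n, i ≤ j → u j ≤ u i) →
      u ∈ initialCone G l) ∧ Submodule.span ℝ (initialCone G l) = ⊤ := by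
  classical
  have main := mem_cone G l hord
  refine ⟨main, ?_⟩
  rw [eq_top_iff]
  intro x _
  rw [pi_eq_sum_univ x]
  refine Submodule.sum_mem _ fun i _ => Submodule.smul_mem _ _ ?_
  set w : Fin n → ℝ := fun j => if (j : ℕ) ≤ (i : ℕ) then 1 else 0 with hw
  set w' : Fin n → ℝ := fun j => if (j : ℕ) < (i : ℕ) then 1 else 0 with hw'
  have hww : (fun j : Fin n => if i = j then (1:ℝ) else 0) = w - w' := by
    funext j
    rw [Pi.sub_apply, hw, hw']
    have : i = j ↔ (i : ℕ) = (j : ℕ) := Fin.ext_iff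
    simp only [this]
    split_ifs <;> first | (exfalso; omega) | norm_num
  rw [hww]
  have hwmem : w ∈ initialCone G l := by
    refine main w (fun j => ?_) (fun a b hab => ?_)
    · simp only [hw]; split_ifs <;> norm_num
    · simp only [hw]
      have h := Fin.le_def.mp hab
      split_ifs <;> first | (exfalso; omega) | norm_num
  have hwmem' : w' ∈ initialCone G l := by
    refine main w' (fun j => ?_) (fun a b hab => ?_)
    · simp only [hw']; split_ifs <;> norm_num
    · simp only [hw']
      have h := Fin.le_def.mp hab
      split_ifs <;> first | (exfalso; omega) | norm_num
  exact Submodule.sub_mem _ (Submodule.subset_span hwmem) (Submodule.subset_span hwmem')
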